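/- For k ≥ 1, the matrix D(B^θ_k) + 2Iₙ has rank 4, so -2 is a distance eigenvalue of B^θ_k with multiplicity n − 4, where n = k + 4. -/

import Mathlib

open Real

/-- The `k`-th largest eigenvalue (1-indexed, with multiplicity) of a real
symmetric matrix; junk value `0` if the matrix is not Hermitian. -/
noncomputable def kthLargestEig {V : Type*} [Fintype V] [DecidableEq V]
    (k : ℕ) (A : Matrix V V ℝ) : ℝ :=
  if h : A.IsHermitian then
    ((Finset.univ.val.map h.eigenvalues).sort (· ≤ ·)).getD (Fintype.card V - k) 0
  else 0

/-- The second largest eigenvalue of a real symmetric matrix. -/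
noncomputable def lambda2 {V : Type*} [Fintype V] [DecidableEq V]
    (A : Matrix V V ℝ) : ℝ := kthLargestEig 2 A

/-- The distance matrix of a graph (entries are graph distances, as reals). -/
noncomputable def distMatrix {V : Type*} [Fintype V] (G : SimpleGraph V) :
    Matrix V V ℝ := fun u v => (G.dist u v : ℝ)

/-- A graph is chordal if every cycle of length at least 4 has a chord, i.e. an
edge of the graph joining two vertices of the cycle that is not a cycle edge. -/
def SimpleGraph.Chordal {V : Type*} (G : SimpleGraph V) : Prop :=
  ∀ (u : V) (w : G.Walk u u), w.IsCycle → 4 ≤ w.length →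
    ∃ x y, x ∈ w.support ∧ y ∈ w.support ∧ G.Adj x y ∧ s(x, y) ∉ w.edges

/-- `B^θ_k`: the graph obtained from `K₄` minus the edge `{2,3}` (vertices
`0 = w`, `1 = z` of degree 3, `2, 3` of degree 2) by attaching `k` pendant
vertices (vertices `4, …, k+3`) at `w = 0`. -/
def Btheta (k : ℕ) : SimpleGraph (Fin (k + 4)) where
  Adj x y := x ≠ y ∧
    (((x : ℕ) < 4 ∧ (y : ℕ) < 4 ∧
        ¬(((x : ℕ) = 2 ∧ (y : ℕ) = 3) ∨ ((x : ℕ) = 3 ∧ (y : ℕ) = 2))) ∨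
      ((x : ℕ) = 0 ∧ 4 ≤ (y : ℕ)) ∨ ((y : ℕ) = 0 ∧ 4 ≤ (x : ℕ)))
  symm := by
    constructor
    intro x y h
    exact ⟨h.1.symm, by tauto⟩
  loopless := by
    constructor
    intro x h
    exact h.1 rfl

/-- The multiset of eigenvalues (with multiplicity) of a real symmetric matrix;
junk value `0` if the matrix is not Hermitian. -/
noncomputable def eigMultiset {V : Type*} [Fintype V] [DecidableEq V]
    (A : Matrix V V ℝ) : Multiset ℝ :=
  if h : A.IsHermitian then Finset.univ.val.map h.eigenvalues else 0


namespace BthetaAux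
open Matrix Finset

lemma rank_sub_smul_one {n : Type*} [Fintype n] [DecidableEq n]
    {A : Matrix n n ℝ} (hA : A.IsHermitian) (μ : ℝ) :
    (A - μ • (1 : Matrix n n ℝ)).rank = Fintype.card {i // hA.eigenvalues i ≠ μ} := by
  set U : Matrix n n ℝ := (hA.eigenvectorUnitary : Matrix n n ℝ) with hUdef
  have h1 : U * star U = 1 := (Matrix.mem_unitaryGroup_iff).mp hA.eigenvectorUnitary.2
  have hdetU : IsUnit U.det :=
    IsUnit.of_mul_eq_one (star U).det (by rw [← det_mul, h1, det_one])
  have hdetsU : IsUnit (star U).det :=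
    IsUnit.of_mul_eq_one U.det
      (by rw [← det_mul, (Matrix.mem_unitaryGroup_iff').mp hA.eigenvectorUnitary.2, det_one])
  have hdiag : Matrix.diagonal (RCLike.ofReal ∘ hA.eigenvalues)
      = Matrix.diagonal hA.eigenvalues := by congr 1
  have key : A - μ • (1 : Matrix n n ℝ)
      = U * (Matrix.diagonal (fun i => hA.eigenvalues i - μ)) * star U := by
    conv_lhs => rw [hA.spectral_theorem, Unitary.conjStarAlgAut_apply, hdiag]
    have h2 : μ • (1 : Matrix n n ℝ) = U * (μ • (1 : Matrix n n ℝ)) * star U := by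
      rw [mul_smul_comm, smul_mul_assoc, mul_one, h1]
    rw [h2, ← sub_mul, ← mul_sub]
    congr 2
    rw [smul_one_eq_diagonal, diagonal_sub]
  rw [key, rank_mul_eq_left_of_isUnit_det _ _ hdetsU, rank_mul_eq_right_of_isUnit_det _ _ hdetU,
    rank_diagonal]
  exact Fintype.card_congr (Equiv.subtypeEquivRight (fun i => by simp [sub_ne_zero]))

lemma rank_submatrix_le' {l m : Type*} [Fintype l] [Fintype m] [DecidableEq m] [DecidableEq l]
    (A : Matrix m m ℝ) (f : l → m) : (A.submatrix f f).rank ≤ A.rank := by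
  have h : A.submatrix f f =
      ((1 : Matrix m m ℝ).submatrix f id) * A * ((1 : Matrix m m ℝ).submatrix id f) := by
    ext i j
    rw [Matrix.mul_apply]
    simp only [Matrix.mul_apply, Matrix.submatrix_apply, Matrix.one_apply, id_eq, ite_mul, mul_ite,
      one_mul, mul_one, zero_mul, mul_zero, Finset.sum_ite_eq, Finset.sum_ite_eq',
      Finset.mem_univ, if_true]
  rw [h]
  exact le_trans (Matrix.rank_mul_le_left _ _) (Matrix.rank_mul_le_right _ _)

def P : Matrix (Fin 4) (Fin 4) ℝ := !![2,1,1,1; 1,2,1,2; 1,1,2,2; 1,2,2,2]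

def g (k : ℕ) (u : Fin (k+4)) : Fin 4 :=
  if (u:ℕ) = 0 then 0 else if (u:ℕ) = 1 then 1 else if (u:ℕ) < 4 then 2 else 3

def s (k : ℕ) (hk : 1 ≤ k) (i : Fin 4) : Fin (k+4) :=
  ⟨if i.val = 3 then 4 else i.val, by have := i.isLt; split <;> omega⟩

lemma g_s (k : ℕ) (hk : 1 ≤ k) (i : Fin 4) : g k (s k hk i) = i := by
  fin_cases i <;> simp [g, s]

lemma detP : P.det = -3 := by
  rw [Matrix.det_succ_row_zero]
  simp [P, Fin.sum_univ_succ, Matrix.det_fin_three, Fin.succAbove]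
  norm_num

lemma rankP : P.rank = 4 := by
  have : IsUnit P.det := by rw [detP]; norm_num
  rw [Matrix.rank_of_isUnit P ((Matrix.isUnit_iff_isUnit_det P).mpr this)]
  simp

lemma adj_iff {k : ℕ} (x y : Fin (k+4)) : (Btheta k).Adj x y ↔ ((x:ℕ) ≠ (y:ℕ) ∧
    (((x : ℕ) < 4 ∧ (y : ℕ) < 4 ∧
        ¬(((x : ℕ) = 2 ∧ (y : ℕ) = 3) ∨ ((x : ℕ) = 3 ∧ (y : ℕ) = 2))) ∨
      ((x : ℕ) = 0 ∧ 4 ≤ (y : ℕ)) ∨ ((y : ℕ) = 0 ∧ 4 ≤ (x : ℕ)))) := by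
  constructor
  · rintro ⟨h1, h2⟩; exact ⟨fun h => h1 (Fin.ext h), h2⟩
  · rintro ⟨h1, h2⟩; exact ⟨fun h => h1 (congrArg Fin.val h), h2⟩

lemma adj_zero {k : ℕ} (x : Fin (k+4)) (hx : (x:ℕ) ≠ 0) : (Btheta k).Adj x 0 := by
  rw [adj_iff]
  have h0 : ((0 : Fin (k+4)) : ℕ) = 0 := rfl
  rw [h0]
  rcases lt_or_ge (x:ℕ) 4 with h | h
  · exact ⟨hx, Or.inl ⟨h, by omega, by omega⟩⟩
  · exact ⟨hx, Or.inr (Or.inr ⟨rfl, h⟩)⟩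

open scoped Classical in
lemma dist_formula {k : ℕ} (u v : Fin (k+4)) :
    (Btheta k).dist u v = if u = v then 0 else if (Btheta k).Adj u v then 1 else 2 := by
  split_ifs with h1 h2
  · subst h1; exact SimpleGraph.dist_self
  · exact SimpleGraph.dist_eq_one_iff_adj.mpr h2
  · have hu : (u:ℕ) ≠ 0 := by
      intro h; apply h2
      have : u = 0 := Fin.ext h
      subst this
      exact ((Btheta k).adj_symm (adj_zero v (fun h' => h1 ((Fin.ext h' : v = 0)).symm)))
    have hv : (v:ℕ) ≠ 0 := by
      intro h; apply h2
      have : v = 0 := Fin.ext h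
      subst this
      exact adj_zero u hu
    have hle : (Btheta k).dist u v ≤ 2 := by
      have := SimpleGraph.dist_le
        ((adj_zero u hu).toWalk.append ((Btheta k).adj_symm (adj_zero v hv)).toWalk)
      simpa [SimpleGraph.Walk.length_append] using this
    have hne0 : (Btheta k).dist u v ≠ 0 := by
      rw [Ne, SimpleGraph.dist_eq_zero_iff_eq_or_not_reachable]
      push_neg
      exact ⟨h1, ⟨(adj_zero u hu).toWalk.append ((Btheta k).adj_symm (adj_zero v hv)).toWalk⟩⟩
    have hne1 : (Btheta k).dist u v ≠ 1 := fun h => h2 (SimpleGraph.dist_eq_one_iff_adj.mp h)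
    omega

open scoped Classical in
lemma entry_eq {k : ℕ} (u v : Fin (k+4)) :
    (if (Btheta k).Adj u v then (1:ℝ) else 2) = P (g k u) (g k v) := by
  have hu4 : (u:ℕ) < k + 4 := u.isLt
  have hv4 : (v:ℕ) < k + 4 := v.isLt
  rcases (by omega : (u:ℕ) = 0 ∨ (u:ℕ) = 1 ∨ (u:ℕ) = 2 ∨ (u:ℕ) = 3 ∨ 4 ≤ (u:ℕ)) with hu|hu|hu|hu|hu <;>
    rcases (by omega : (v:ℕ) = 0 ∨ (v:ℕ) = 1 ∨ (v:ℕ) = 2 ∨ (v:ℕ) = 3 ∨ 4 ≤ (v:ℕ)) with hv|hv|hv|hv|hv <;>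
    · first
      | (rw [if_pos ((adj_iff u v).mpr (by omega))]
         simp only [g]
         split_ifs <;>
           first
             | (exfalso; omega)
             | norm_num [P, Matrix.vecHead, Matrix.vecTail, Matrix.cons_val_two, Matrix.cons_val_three])
      | (rw [if_neg (fun hadj => by have := (adj_iff u v).mp hadj; omega)]
         simp only [g]
         split_ifs <;>
           first
             | (exfalso; omega)
             | norm_num [P, Matrix.vecHead, Matrix.vecTail, Matrix.cons_val_two, Matrix.cons_val_three])

lemma matrix_eq (k : ℕ) :
    distMatrix (Btheta k) + (2:ℝ) • (1 : Matrix (Fin (k+4)) (Fin (k+4)) ℝ)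
      = P.submatrix (g k) (g k) := by
  classical
  ext u v
  rw [Matrix.add_apply, Matrix.smul_apply, Matrix.one_apply, Matrix.submatrix_apply,
    ← entry_eq u v]
  show ((Btheta k).dist u v : ℝ) + _ = _
  rw [dist_formula]
  by_cases h : u = v
  · subst h
    simp [SimpleGraph.irrefl]
  · have hadj := h
    by_cases h2 : (Btheta k).Adj u v <;> simp [h, h2]

lemma rank_eq (k : ℕ) (hk : 1 ≤ k) :
    (distMatrix (Btheta k) + (2:ℝ) • (1 : Matrix (Fin (k+4)) (Fin (k+4)) ℝ)).rank = 4 := by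
  rw [matrix_eq]
  have h1 : (P.submatrix (g k) (g k)).rank ≤ P.rank := rank_submatrix_le' P (g k)
  have h2 : P.rank ≤ (P.submatrix (g k) (g k)).rank := by
    have : ((P.submatrix (g k) (g k)).submatrix (s k hk) (s k hk)) = P := by
      rw [Matrix.submatrix_submatrix]
      have : g k ∘ s k hk = id := funext (g_s k hk)
      rw [this, Matrix.submatrix_id_id]
    calc P.rank = ((P.submatrix (g k) (g k)).submatrix (s k hk) (s k hk)).rank := by rw [this]
      _ ≤ (P.submatrix (g k) (g k)).rank := rank_submatrix_le' _ _
  rw [rankP] at h1 h2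
  omega
  
end BthetaAux

open BthetaAux Finset in
theorem rank_Btheta_dist_add_two (k : ℕ) (hk : 1 ≤ k) :
    (distMatrix (Btheta k) + (2 : ℝ) • (1 : Matrix (Fin (k + 4)) (Fin (k + 4)) ℝ)).rank = 4 ∧
    Multiset.count (-2 : ℝ) (eigMultiset (distMatrix (Btheta k))) = k := by
  classical
  have hA : (distMatrix (Btheta k)).IsHermitian := by
    ext u v
    simp [Matrix.conjTranspose_apply, distMatrix, SimpleGraph.dist_comm]
  refine ⟨rank_eq k hk, ?_⟩
  have hsub : distMatrix (Btheta k) - (-2:ℝ) • (1 : Matrix (Fin (k+4)) (Fin (k+4)) ℝ)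
      = distMatrix (Btheta k) + (2:ℝ) • (1 : Matrix (Fin (k+4)) (Fin (k+4)) ℝ) := by
    rw [neg_smul, sub_neg_eq_add]
  have h4 : (univ.filter fun i => hA.eigenvalues i ≠ (-2:ℝ)).card = 4 := by
    rw [← Fintype.card_subtype, ← rank_sub_smul_one hA (-2), hsub, rank_eq k hk]
  have h5 := Finset.card_filter_add_card_filter_not
    (s := (univ : Finset (Fin (k+4)))) (p := fun i => hA.eigenvalues i = (-2:ℝ))
  simp only [Finset.card_univ, Fintype.card_fin] at h5
  have hcount : Multiset.count (-2:ℝ) (eigMultiset (distMatrix (Btheta k)))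
      = (univ.filter fun i => hA.eigenvalues i = (-2:ℝ)).card := by
    rw [eigMultiset, dif_pos hA, Multiset.count_map]
    have heq : (univ.filter (fun a => (-2:ℝ) = hA.eigenvalues a))
        = (univ.filter (fun i => hA.eigenvalues i = (-2:ℝ))) := by
      ext i; simp [eq_comm]
    rw [← Finset.filter_val, heq]
    rfl
  simp only [ne_eq] at h4
  rw [hcount]
  omega
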